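/- Let g(T) ∈ K[T] be monic, irreducible, and separable, and let N be a splitting field of g over K. Let L₁, L₂ be intermediate fields of N/K and let h₁(T) ∈ L₁[T], h₂(T) ∈ L₂[T] be monic polynomials with hᵢ dividing g and g = Nm_{Lᵢ|K} hᵢ for i = 1, 2, where Lᵢ is generated over K by the coefficients of hᵢ. If h₁(T) divides h₂(T) in N[T], then L₂ ⊆ L₁. -/

import Mathlib

open Polynomial IntermediateField

set_option synthInstance.maxHeartbeats 400000

/-- Let `g(T) ∈ K[T]` be monic, irreducible, and separable, and let `N` be a
splitting field of `g` over `K`. Let `L₁, L₂` be intermediate fields of `N/K` and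
`h₁ ∈ L₁[T]`, `h₂ ∈ L₂[T]` monic polynomials, with `hᵢ ∣ g` and `g = Nm_{Lᵢ|K} hᵢ`, where
`Lᵢ` is generated over `K` by the coefficients of `hᵢ`. If `h₁ ∣ h₂` in `N[T]`, then
`L₂ ⊆ L₁`. -/
theorem normic_dvd_implies_field_containment
    (K N : Type*) [Field K] [Field N] [Algebra K N]
    (g : Polynomial K) (hmonic : g.Monic) (hirr : Irreducible g) (hsep : g.Separable)
    [Polynomial.IsSplittingField K N g] [FiniteDimensional K N]
    (L₁ L₂ : IntermediateField K N) (h₁ h₂ : Polynomial N)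
    (hm₁ : h₁.Monic) (hm₂ : h₂.Monic)
    (hcoef₁ : IntermediateField.adjoin K (Set.range h₁.coeff) = L₁)
    (hcoef₂ : IntermediateField.adjoin K (Set.range h₂.coeff) = L₂)
    (hdvd₁ : h₁ ∣ g.map (algebraMap K N)) (hdvd₂ : h₂ ∣ g.map (algebraMap K N))
    (hnorm₁ : ∃ h₁' : Polynomial L₁, h₁'.map (algebraMap L₁ N) = h₁ ∧
        g.map (algebraMap K N) = ∏ v : L₁ →ₐ[K] N, h₁'.map v.toRingHom)
    (hnorm₂ : ∃ h₂' : Polynomial L₂, h₂'.map (algebraMap L₂ N) = h₂ ∧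
        g.map (algebraMap K N) = ∏ v : L₂ →ₐ[K] N, h₂'.map v.toRingHom)
    (hdiv : h₁ ∣ h₂) :
    L₂ ≤ L₁ := by
  obtain ⟨h₁', hmap₁, hprod₁⟩ := hnorm₁
  obtain ⟨h₂', hmap₂, hprod₂⟩ := hnorm₂
  haveI : IsGalois K N := IsGalois.of_separable_splitting_field hsep
  have hsq : Squarefree (g.map (algebraMap K N)) :=
    (hsep.map).squarefree
  -- h₁ is not a unit
  have hne : ¬ IsUnit h₁ := by
    intro hu
    have h1 : h₁ = 1 := hm₁.isUnit_iff.mp hu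
    have hmapinj : Function.Injective (algebraMap (↥L₁) N) :=
      (algebraMap (↥L₁) N).injective
    have h1' : h₁' = 1 := by
      apply Polynomial.map_injective _ hmapinj
      rw [hmap₁, h1, Polynomial.map_one]
    have : g.map (algebraMap K N) = 1 := by
      rw [hprod₁, h1']
      simp
    have : IsUnit (g.map (algebraMap K N)) := this ▸ isUnit_one
    have hdeg : g.natDegree = 0 := by
      have := Polynomial.natDegree_eq_zero_of_isUnit this
      rwa [Polynomial.natDegree_map_eq_of_injective (algebraMap K N).injective] at this
    exact absurd hdeg hirr.natDegree_pos.ne'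
  -- main argument
  rw [← IsGalois.fixedField_fixingSubgroup L₁]
  intro x hx
  intro σ'
  obtain ⟨σ, hσ⟩ := σ'
  rw [IntermediateField.mem_fixingSubgroup_iff] at hσ
  show σ x = x
  -- σ fixes h₁
  have hfix₁ : h₁.map σ.toAlgHom.toRingHom = h₁ := by
    ext n
    rw [Polynomial.coeff_map]
    exact hσ _ (hcoef₁ ▸ subset_adjoin K _ ⟨n, rfl⟩)
  -- the embedding σ ∘ val of L₂
  set v₀ : L₂ →ₐ[K] N := σ.toAlgHom.comp L₂.val with hv₀
  have hval : h₂'.map (L₂.val : L₂ →ₐ[K] N).toRingHom = h₂ := hmap₂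
  have hv₀map : h₂'.map v₀.toRingHom = h₂.map σ.toAlgHom.toRingHom := by
    rw [← hval, Polynomial.map_map]
    rfl
  have hdvd_v₀ : h₁ ∣ h₂'.map v₀.toRingHom := by
    rw [hv₀map]
    have := Polynomial.map_dvd σ.toAlgHom.toRingHom hdiv
    rwa [hfix₁] at this
  have hdvd_val : h₁ ∣ h₂'.map (L₂.val : L₂ →ₐ[K] N).toRingHom := hval ▸ hdiv
  -- v₀ = val
  have hveq : v₀ = (L₂.val : L₂ →ₐ[K] N) := by
    classical
    by_contra hnev
    have hsub : ({v₀, (L₂.val : L₂ →ₐ[K] N)} : Finset (L₂ →ₐ[K] N)) ⊆ Finset.univ :=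
      Finset.subset_univ _
    have hdvdprod : (∏ v ∈ ({v₀, (L₂.val : L₂ →ₐ[K] N)} : Finset (L₂ →ₐ[K] N)),
        h₂'.map v.toRingHom) ∣ g.map (algebraMap K N) := by
      rw [hprod₂]
      exact Finset.prod_dvd_prod_of_subset _ _ _ hsub
    rw [Finset.prod_pair hnev] at hdvdprod
    have : h₁ * h₁ ∣ g.map (algebraMap K N) :=
      dvd_trans (mul_dvd_mul hdvd_v₀ hdvd_val) hdvdprod
    exact hne (hsq h₁ this)
  -- conclude
  have := congrFun (congrArg (fun f : L₂ →ₐ[K] N => (f : L₂ → N)) hveq) ⟨x, hx⟩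
  simpa [hv₀] using this
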